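/- arXiv:1904.09010 — 3 statements merged into one kernel-verified Lean document; each statement's English description precedes it below -/
import Mathlib

section
/- Let a > 0, b > 0, T > 0, and let h : [0, T) → ℝ be a differentiable function with h'(t) ≤ −a·h(t)² + b for every t ∈ [0, T). Then for every t ∈ [0, T), h(t) ≤ max (h(0)) (Real.sqrt (b/a)); that is, h(t) ≤ max{h(0), √(b/a)}. -/
open Real Set

/-- ODE comparison for `h' ≤ −a h² + b`: such a differentiable function on `[0, T)`
stays below `max {h(0), √(b/a)}`. -/
theorem ode_comparison_bounded (a b T : ℝ) (ha : 0 < a) (hb : 0 < b) (hT : 0 < T)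
    (h : ℝ → ℝ)
    (hdiff : ∀ t ∈ Set.Ico (0 : ℝ) T, DifferentiableAt ℝ h t)
    (hineq : ∀ t ∈ Set.Ico (0 : ℝ) T, deriv h t ≤ -a * (h t) ^ 2 + b) :
    ∀ t ∈ Set.Ico (0 : ℝ) T, h t ≤ max (h 0) (Real.sqrt (b / a)) := by
  intro t ht
  set M := max (h 0) (Real.sqrt (b / a)) with hM
  by_contra hcon
  push_neg at hcon
  obtain ⟨ht0, htT⟩ := ht
  -- h is continuous on Icc 0 t
  have hsub : Icc (0 : ℝ) t ⊆ Ico (0 : ℝ) T := fun s hs =>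
    ⟨hs.1, lt_of_le_of_lt hs.2 htT⟩
  have hcont : ContinuousOn h (Icc 0 t) := fun s hs =>
    (hdiff s (hsub hs)).continuousAt.continuousWithinAt
  -- the last time h ≤ M
  set S := Icc (0 : ℝ) t ∩ h ⁻¹' (Iic M) with hS
  have h0S : (0 : ℝ) ∈ S := ⟨⟨le_refl 0, ht0⟩, show h 0 ≤ M from le_max_left _ _⟩
  have hSne : S.Nonempty := ⟨0, h0S⟩
  have hSbdd : BddAbove S := ⟨t, fun s hs => hs.1.2⟩
  have hSclosed : IsClosed S := hcont.preimage_isClosed_of_isClosed isClosed_Icc isClosed_Iic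
  set u := sSup S with hu
  have huS : u ∈ S := hSclosed.csSup_mem hSne hSbdd
  have hu0 : 0 ≤ u := huS.1.1
  have hut : u ≤ t := huS.1.2
  have huM : h u ≤ M := huS.2
  have hult : u < t := by
    rcases lt_or_eq_of_le hut with h' | h'
    · exact h'
    · exact absurd (h' ▸ huM) (not_le.mpr hcon)
  -- on (u, t], h > M
  have hgt : ∀ s ∈ Ioc u t, M < h s := by
    intro s hs
    by_contra hle
    push_neg at hle
    have : s ∈ S := ⟨⟨le_trans hu0 hs.1.le, hs.2⟩, hle⟩
    exact absurd (le_csSup hSbdd this) (not_le.mpr hs.1)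
  -- deriv negative on Ioo u t
  have hsqrt_nonneg : 0 ≤ Real.sqrt (b / a) := Real.sqrt_nonneg _
  have hderiv_neg : ∀ s ∈ interior (Icc u t), deriv h s < 0 := by
    intro s hs
    rw [interior_Icc] at hs
    have hsIco : s ∈ Ico (0 : ℝ) T :=
      ⟨le_trans hu0 hs.1.le, lt_trans hs.2 htT⟩
    have hMs : M < h s := hgt s ⟨hs.1, hs.2.le⟩
    have h1 : Real.sqrt (b / a) < h s := lt_of_le_of_lt (le_max_right _ _) hMs
    have h2 : b / a < (h s) ^ 2 := by
      have := pow_lt_pow_left₀ h1 hsqrt_nonneg (n := 2) (by norm_num)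
      rwa [Real.sq_sqrt (by positivity : (0:ℝ) ≤ b / a)] at this
    have h3 : b < a * (h s) ^ 2 := (div_lt_iff₀' ha).mp h2
    calc deriv h s ≤ -a * (h s) ^ 2 + b := hineq s hsIco
      _ < 0 := by linarith
  have hanti : StrictAntiOn h (Icc u t) :=
    strictAntiOn_of_deriv_neg (convex_Icc u t)
      (hcont.mono (Icc_subset_Icc hu0 le_rfl)) hderiv_neg
  have : h t < h u := hanti ⟨le_rfl, hult.le⟩ ⟨hult.le, le_rfl⟩ hult
  linarith [hcon, huM]
end

section
/- Let 𝕆 = ℝ × ℝ⁷ with the octonion product ∘ defined from the standard G₂ 3-form φ₀, and for X = (x, ξ) ∈ 𝕆 let X̄ = (x, −ξ) denote the conjugate. Let V ∈ 𝕆 be a unit octonion, i.e. ‖V‖ = 1, so that V⁻¹ = V̄. Then for all A, B ∈ 𝕆: (A ∘ V) ∘ (V̄ ∘ B) = A ∘ B + [A, B, V] ∘ V̄, where [A, B, V] = A ∘ (B ∘ V) − (A ∘ B) ∘ V is the associator. -/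
open scoped RealInnerProductSpace

/-- The elementary alternating 3-form `eⁱ ∧ eʲ ∧ eᵏ` on `ℝ⁷`. -/
noncomputable def e3 (i j k : Fin 7) (u v w : EuclideanSpace ℝ (Fin 7)) : ℝ :=
  Matrix.det !![u i, u j, u k; v i, v j, v k; w i, w j, w k]

/-- The standard G₂ 3-form on `ℝ⁷`:
`φ₀ = e¹²³ + e¹⁴⁵ + e¹⁶⁷ + e²⁴⁶ − e²⁵⁷ − e³⁴⁷ − e³⁵⁶` (indices shifted to start at 0). -/
noncomputable def phi0 (u v w : EuclideanSpace ℝ (Fin 7)) : ℝ :=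
  e3 0 1 2 u v w + e3 0 3 4 u v w + e3 0 5 6 u v w + e3 1 3 5 u v w
    - e3 1 4 6 u v w - e3 2 3 6 u v w - e3 2 4 5 u v w

/-- The octonion product on `𝕆 = ℝ × ℝ⁷`:
`(a, α) ∘ (b, β) = (ab − ⟨α, β⟩, aβ + bα + α ×₀ β)`. -/
noncomputable def omul
    (cross : EuclideanSpace ℝ (Fin 7) → EuclideanSpace ℝ (Fin 7) →
      EuclideanSpace ℝ (Fin 7))
    (A B : ℝ × EuclideanSpace ℝ (Fin 7)) : ℝ × EuclideanSpace ℝ (Fin 7) :=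
  (A.1 * B.1 - ⟪A.2, B.2⟫, A.1 • B.2 + B.1 • A.2 + cross A.2 B.2)

/-- Octonion conjugation: `(x, ξ) ↦ (x, −ξ)`. -/
def oconj (X : ℝ × EuclideanSpace ℝ (Fin 7)) : ℝ × EuclideanSpace ℝ (Fin 7) :=
  (X.1, -X.2)

set_option maxHeartbeats 4000000 in
/-- For a unit octonion `V` (so that `V⁻¹ = V̄`), the modified product satisfies
`(A∘V)∘(V̄∘B) = A∘B + [A,B,V]∘V̄`, where `[A,B,V] = A∘(B∘V) − (A∘B)∘V` is the
associator; here `∘` is the octonion product on `𝕆 = ℝ × ℝ⁷` defined via the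
cross product of the standard G₂ 3-form `φ₀`. -/

theorem modified_product_eq_assoc
    (cross : EuclideanSpace ℝ (Fin 7) → EuclideanSpace ℝ (Fin 7) →
      EuclideanSpace ℝ (Fin 7))
    (hcross : ∀ u v w : EuclideanSpace ℝ (Fin 7), ⟪cross u v, w⟫ = phi0 u v w)
    (V : ℝ × EuclideanSpace ℝ (Fin 7)) (hV : V.1 ^ 2 + ‖V.2‖ ^ 2 = 1)
    (A B : ℝ × EuclideanSpace ℝ (Fin 7)) :
    omul cross (omul cross A V) (omul cross (oconj V) B) =
      omul cross A B +
        omul cross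
          (omul cross A (omul cross B V) - omul cross (omul cross A B) V)
          (oconj V) := by
  have hc : ∀ (u v : EuclideanSpace ℝ (Fin 7)) (i : Fin 7),
      cross u v i = phi0 u v (EuclideanSpace.single i 1) := by
    intro u v i
    have h := hcross u v (EuclideanSpace.single i 1)
    rw [← h]
    simp [PiLp.inner_apply, EuclideanSpace.single_apply]
  have hc0 : ∀ u v : EuclideanSpace ℝ (Fin 7), cross u v 0 = -u 6 * v 5 + u 5 * v 6 - u 4 * v 3 + u 3 * v 4 - u 2 * v 1 + u 1 * v 2 := fun u v => by rw [hc]; simp [phi0, e3, Matrix.det_fin_three, EuclideanSpace.single_apply]; ring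
  have hc1 : ∀ u v : EuclideanSpace ℝ (Fin 7), cross u v 1 = u 6 * v 4 - u 5 * v 3 - u 4 * v 6 + u 3 * v 5 + u 2 * v 0 - u 0 * v 2 := fun u v => by rw [hc]; simp [phi0, e3, Matrix.det_fin_three, EuclideanSpace.single_apply]; ring
  have hc2 : ∀ u v : EuclideanSpace ℝ (Fin 7), cross u v 2 = u 6 * v 3 + u 5 * v 4 - u 4 * v 5 - u 3 * v 6 - u 1 * v 0 + u 0 * v 1 := fun u v => by rw [hc]; simp [phi0, e3, Matrix.det_fin_three, EuclideanSpace.single_apply]; ring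
  have hc3 : ∀ u v : EuclideanSpace ℝ (Fin 7), cross u v 3 = -u 6 * v 2 + u 5 * v 1 + u 4 * v 0 + u 2 * v 6 - u 1 * v 5 - u 0 * v 4 := fun u v => by rw [hc]; simp [phi0, e3, Matrix.det_fin_three, EuclideanSpace.single_apply]; ring
  have hc4 : ∀ u v : EuclideanSpace ℝ (Fin 7), cross u v 4 = -u 6 * v 1 - u 5 * v 2 - u 3 * v 0 + u 2 * v 5 + u 1 * v 6 + u 0 * v 3 := fun u v => by rw [hc]; simp [phi0, e3, Matrix.det_fin_three, EuclideanSpace.single_apply]; ring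
  have hc5 : ∀ u v : EuclideanSpace ℝ (Fin 7), cross u v 5 = u 6 * v 0 + u 4 * v 2 - u 3 * v 1 - u 2 * v 4 + u 1 * v 3 - u 0 * v 6 := fun u v => by rw [hc]; simp [phi0, e3, Matrix.det_fin_three, EuclideanSpace.single_apply]; ring
  have hc6 : ∀ u v : EuclideanSpace ℝ (Fin 7), cross u v 6 = -u 5 * v 0 + u 4 * v 1 + u 3 * v 2 - u 2 * v 3 - u 1 * v 4 + u 0 * v 5 := fun u v => by rw [hc]; simp [phi0, e3, Matrix.det_fin_three, EuclideanSpace.single_apply]; ring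
  have hV' : V.1 ^ 2 + (V.2 0 ^ 2 + V.2 1 ^ 2 + V.2 2 ^ 2 + V.2 3 ^ 2
      + V.2 4 ^ 2 + V.2 5 ^ 2 + V.2 6 ^ 2) = 1 := by
    have h2 : ‖V.2‖ ^ 2 = V.2 0 ^ 2 + V.2 1 ^ 2 + V.2 2 ^ 2 + V.2 3 ^ 2
        + V.2 4 ^ 2 + V.2 5 ^ 2 + V.2 6 ^ 2 := by
      rw [← real_inner_self_eq_norm_sq]
      simp only [PiLp.inner_apply, RCLike.inner_apply, conj_trivial, Fin.sum_univ_seven]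
      ring
    linarith
  refine Prod.ext_iff.mpr ⟨?_, PiLp.ext fun i => ?_⟩
  · simp only [omul, oconj, Prod.fst_add, Prod.snd_add, Prod.fst_sub, Prod.snd_sub,
        PiLp.inner_apply, RCLike.inner_apply, conj_trivial, Fin.sum_univ_seven,
        PiLp.add_apply, PiLp.sub_apply, PiLp.smul_apply, PiLp.neg_apply, smul_eq_mul,
        Fin.reduceFinMk, Fin.isValue, hc0, hc1, hc2, hc3, hc4, hc5, hc6]
    linear_combination (-A.2 6*B.2 6 - A.2 5*B.2 5 - A.2 4*B.2 4 - A.2 3*B.2 3 - A.2 2*B.2 2 - A.2 1*B.2 1 - A.2 0*B.2 0 + A.1*B.1) * hV'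
  · fin_cases i <;>
      simp only [omul, oconj, Prod.fst_add, Prod.snd_add, Prod.fst_sub, Prod.snd_sub,
        PiLp.inner_apply, RCLike.inner_apply, conj_trivial, Fin.sum_univ_seven,
        PiLp.add_apply, PiLp.sub_apply, PiLp.smul_apply, PiLp.neg_apply, smul_eq_mul,
        Fin.reduceFinMk, Fin.isValue, hc0, hc1, hc2, hc3, hc4, hc5, hc6]
    · linear_combination (-A.2 6*B.2 5 + A.2 5*B.2 6 - A.2 4*B.2 3 + A.2 3*B.2 4 - A.2 2*B.2 1 + A.2 1*B.2 2 + A.2 0*B.1 + A.1*B.2 0) * hV'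
    · linear_combination (A.2 6*B.2 4 - A.2 5*B.2 3 - A.2 4*B.2 6 + A.2 3*B.2 5 + A.2 2*B.2 0 + A.2 1*B.1 - A.2 0*B.2 2 + A.1*B.2 1) * hV'
    · linear_combination (A.2 6*B.2 3 + A.2 5*B.2 4 - A.2 4*B.2 5 - A.2 3*B.2 6 + A.2 2*B.1 - A.2 1*B.2 0 + A.2 0*B.2 1 + A.1*B.2 2) * hV'
    · linear_combination (-A.2 6*B.2 2 + A.2 5*B.2 1 + A.2 4*B.2 0 + A.2 3*B.1 + A.2 2*B.2 6 - A.2 1*B.2 5 - A.2 0*B.2 4 + A.1*B.2 3) * hV'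
    · linear_combination (-A.2 6*B.2 1 - A.2 5*B.2 2 + A.2 4*B.1 - A.2 3*B.2 0 + A.2 2*B.2 5 + A.2 1*B.2 6 + A.2 0*B.2 3 + A.1*B.2 4) * hV'
    · linear_combination (A.2 6*B.2 0 + A.2 5*B.1 + A.2 4*B.2 2 - A.2 3*B.2 1 - A.2 2*B.2 4 + A.2 1*B.2 3 - A.2 0*B.2 6 + A.1*B.2 5) * hV'
    · linear_combination (A.2 6*B.1 - A.2 5*B.2 0 + A.2 4*B.2 1 + A.2 3*B.2 2 - A.2 2*B.2 3 - A.2 1*B.2 4 + A.2 0*B.2 5 + A.1*B.2 6) * hV'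
end

section
/- Let 𝕆 = ℝ × ℝ⁷ with the octonion product ∘ defined from the standard G₂ 3-form φ₀, and let V = (v₀, v) ∈ 𝕆 be a unit octonion (v₀² + ‖v‖² = 1) with conjugate V̄ = (v₀, −v). Regard vectors α ∈ ℝ⁷ as imaginary octonions (0, α). Define the 3-form φ_V on ℝ⁷ by φ_V(α, β, γ) = ⟨Im ((α ∘ V) ∘ (V̄ ∘ β)), γ⟩. Then φ_V = (v₀² − ‖v‖²)·φ₀ − 2v₀·(v ⌟ ψ₀) + 2·v♭ ∧ (v ⌟ φ₀), where v♭ is the 1-form ⟨v, ·⟩, v⌟ denotes contraction of v into the first slot, and ψ₀ is the standard 4-form on ℝ⁷. -/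
open scoped RealInnerProductSpace

/-- The elementary alternating 4-form `eⁱ ∧ eʲ ∧ eᵏ ∧ eˡ` on `ℝ⁷`. -/
noncomputable def e4 (i j k l : Fin 7) (u v w x : EuclideanSpace ℝ (Fin 7)) : ℝ :=
  Matrix.det !![u i, u j, u k, u l; v i, v j, v k, v l;
                w i, w j, w k, w l; x i, x j, x k, x l]

/-- The standard 4-form `ψ₀ = ⋆φ₀` on `ℝ⁷`:
`ψ₀ = e⁴⁵⁶⁷ + e²³⁶⁷ + e²³⁴⁵ + e¹³⁵⁷ − e¹³⁴⁶ − e¹²⁵⁶ − e¹²⁴⁷`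
(indices shifted to start at 0). -/
noncomputable def psi0 (u v w x : EuclideanSpace ℝ (Fin 7)) : ℝ :=
  e4 3 4 5 6 u v w x + e4 1 2 5 6 u v w x + e4 1 2 3 4 u v w x + e4 0 2 4 6 u v w x
    - e4 0 2 3 5 u v w x - e4 0 1 4 5 u v w x - e4 0 1 3 6 u v w x

/-! ### Auxiliary lemmas -/

lemma e3_expand (i j k : Fin 7) (u v w : EuclideanSpace ℝ (Fin 7)) :
    e3 i j k u v w = u i * (v j * w k - v k * w j) - u j * (v i * w k - v k * w i)
      + u k * (v i * w j - v j * w i) := by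
  simp [e3, Matrix.det_fin_three]; ring

lemma e4_expand (i j k l : Fin 7) (u v w x : EuclideanSpace ℝ (Fin 7)) :
    e4 i j k l u v w x = u i * e3 j k l v w x - u j * e3 i k l v w x
      + u k * e3 i j l v w x - u l * e3 i j k v w x := by
  simp [e4, e3, Matrix.det_succ_row_zero, Fin.sum_univ_succ, Matrix.det_fin_three,
    Fin.succAbove, Fin.lt_def, Fin.castSucc, Fin.castAdd, Fin.castLE, -Fin.val_pos_iff]
  ring

lemma cpt0 (u w : EuclideanSpace ℝ (Fin 7)) :
    phi0 u w (EuclideanSpace.single 0 1) = (u 1 * w 2 - u 2 * w 1) + (u 3 * w 4 - u 4 * w 3) + (u 5 * w 6 - u 6 * w 5) := by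
  simp [phi0, e3_expand, EuclideanSpace.single_apply] <;> ring

lemma cpt1 (u w : EuclideanSpace ℝ (Fin 7)) :
    phi0 u w (EuclideanSpace.single 1 1) = - (u 0 * w 2 - u 2 * w 0) + (u 3 * w 5 - u 5 * w 3) - (u 4 * w 6 - u 6 * w 4) := by
  simp [phi0, e3_expand, EuclideanSpace.single_apply] <;> ring

lemma cpt2 (u w : EuclideanSpace ℝ (Fin 7)) :
    phi0 u w (EuclideanSpace.single 2 1) = (u 0 * w 1 - u 1 * w 0) - (u 3 * w 6 - u 6 * w 3) - (u 4 * w 5 - u 5 * w 4) := by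
  simp [phi0, e3_expand, EuclideanSpace.single_apply] <;> ring

lemma cpt3 (u w : EuclideanSpace ℝ (Fin 7)) :
    phi0 u w (EuclideanSpace.single 3 1) = - (u 0 * w 4 - u 4 * w 0) - (u 1 * w 5 - u 5 * w 1) + (u 2 * w 6 - u 6 * w 2) := by
  simp [phi0, e3_expand, EuclideanSpace.single_apply] <;> ring

lemma cpt4 (u w : EuclideanSpace ℝ (Fin 7)) :
    phi0 u w (EuclideanSpace.single 4 1) = (u 0 * w 3 - u 3 * w 0) + (u 1 * w 6 - u 6 * w 1) + (u 2 * w 5 - u 5 * w 2) := by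
  simp [phi0, e3_expand, EuclideanSpace.single_apply] <;> ring

lemma cpt5 (u w : EuclideanSpace ℝ (Fin 7)) :
    phi0 u w (EuclideanSpace.single 5 1) = - (u 0 * w 6 - u 6 * w 0) + (u 1 * w 3 - u 3 * w 1) - (u 2 * w 4 - u 4 * w 2) := by
  simp [phi0, e3_expand, EuclideanSpace.single_apply] <;> ring

lemma cpt6 (u w : EuclideanSpace ℝ (Fin 7)) :
    phi0 u w (EuclideanSpace.single 6 1) = (u 0 * w 5 - u 5 * w 0) - (u 1 * w 4 - u 4 * w 1) - (u 2 * w 3 - u 3 * w 2) := by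
  simp [phi0, e3_expand, EuclideanSpace.single_apply] <;> ring

/-- Bilinear expansion of `φ₀` in its first two arguments. -/
lemma phi0_expand2 (a b : ℝ) (u w X Y γ : EuclideanSpace ℝ (Fin 7)) :
    phi0 (a • u + X) (b • w + Y) γ =
      a * b * phi0 u w γ + a * phi0 u Y γ + b * phi0 X w γ + phi0 X Y γ := by
  simp only [phi0, e3_expand, PiLp.add_apply, PiLp.smul_apply, smul_eq_mul]
  ring

lemma phi0_neg_left (u w γ : EuclideanSpace ℝ (Fin 7)) :
    phi0 (-u) w γ = - phi0 u w γ := by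
  simp only [phi0, e3_expand, PiLp.neg_apply]; ring

lemma phi0_swap (u w γ : EuclideanSpace ℝ (Fin 7)) :
    phi0 u w γ = - phi0 w u γ := by
  simp only [phi0, e3_expand]; ring

set_option maxHeartbeats 2000000 in
/-- `φ₀(α ×₀ v, β, γ) = ⟨α,β⟩⟨v,γ⟩ − ⟨α,γ⟩⟨v,β⟩ − ψ₀(v,α,β,γ)`. -/
lemma key1 (α v β γ X : EuclideanSpace ℝ (Fin 7))
    (hX : ∀ i, X i = phi0 α v (EuclideanSpace.single i 1)) :
    phi0 X β γ = ⟪α, β⟫ * ⟪v, γ⟫ - ⟪α, γ⟫ * ⟪v, β⟫ - psi0 v α β γ := by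
  have h0 := (hX 0).trans (cpt0 α v)
  have h1 := (hX 1).trans (cpt1 α v)
  have h2 := (hX 2).trans (cpt2 α v)
  have h3 := (hX 3).trans (cpt3 α v)
  have h4 := (hX 4).trans (cpt4 α v)
  have h5 := (hX 5).trans (cpt5 α v)
  have h6 := (hX 6).trans (cpt6 α v)
  simp only [phi0, psi0, e4_expand, e3_expand, h0, h1, h2, h3, h4, h5, h6,
    PiLp.inner_apply, RCLike.inner_apply, conj_trivial, Fin.sum_univ_seven]
  ring

set_option maxHeartbeats 2000000 in
/-- `φ₀(α, −(v ×₀ β), γ) = −⟨α,β⟩⟨v,γ⟩ + ⟨v,α⟩⟨β,γ⟩ − ψ₀(v,α,β,γ)`. -/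
lemma key2 (α v β γ Y : EuclideanSpace ℝ (Fin 7))
    (hY : ∀ i, Y i = -phi0 v β (EuclideanSpace.single i 1)) :
    phi0 α Y γ = -(⟪α, β⟫ * ⟪v, γ⟫) + ⟪v, α⟫ * ⟪β, γ⟫ - psi0 v α β γ := by
  have h0 := (hY 0).trans (congrArg Neg.neg (cpt0 v β))
  have h1 := (hY 1).trans (congrArg Neg.neg (cpt1 v β))
  have h2 := (hY 2).trans (congrArg Neg.neg (cpt2 v β))
  have h3 := (hY 3).trans (congrArg Neg.neg (cpt3 v β))
  have h4 := (hY 4).trans (congrArg Neg.neg (cpt4 v β))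
  have h5 := (hY 5).trans (congrArg Neg.neg (cpt5 v β))
  have h6 := (hY 6).trans (congrArg Neg.neg (cpt6 v β))
  simp only [phi0, psi0, e4_expand, e3_expand, h0, h1, h2, h3, h4, h5, h6,
    PiLp.inner_apply, RCLike.inner_apply, conj_trivial, Fin.sum_univ_seven]
  ring

set_option maxHeartbeats 4000000 in
/-- `φ₀(α ×₀ v, −(v ×₀ β), γ)` in terms of `φ₀` and inner products. -/
lemma key3 (α v β γ X Y : EuclideanSpace ℝ (Fin 7))
    (hX : ∀ i, X i = phi0 α v (EuclideanSpace.single i 1))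
    (hY : ∀ i, Y i = -phi0 v β (EuclideanSpace.single i 1)) :
    phi0 X Y γ = -(⟪v, v⟫ * phi0 α β γ) + ⟪v, α⟫ * phi0 v β γ
      - ⟪v, β⟫ * phi0 v α γ + 2 * ⟪v, γ⟫ * phi0 v α β := by
  have hx0 := (hX 0).trans (cpt0 α v)
  have hx1 := (hX 1).trans (cpt1 α v)
  have hx2 := (hX 2).trans (cpt2 α v)
  have hx3 := (hX 3).trans (cpt3 α v)
  have hx4 := (hX 4).trans (cpt4 α v)
  have hx5 := (hX 5).trans (cpt5 α v)
  have hx6 := (hX 6).trans (cpt6 α v)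
  have hy0 := (hY 0).trans (congrArg Neg.neg (cpt0 v β))
  have hy1 := (hY 1).trans (congrArg Neg.neg (cpt1 v β))
  have hy2 := (hY 2).trans (congrArg Neg.neg (cpt2 v β))
  have hy3 := (hY 3).trans (congrArg Neg.neg (cpt3 v β))
  have hy4 := (hY 4).trans (congrArg Neg.neg (cpt4 v β))
  have hy5 := (hY 5).trans (congrArg Neg.neg (cpt5 v β))
  have hy6 := (hY 6).trans (congrArg Neg.neg (cpt6 v β))
  simp only [phi0, e3_expand, hx0, hx1, hx2, hx3, hx4, hx5, hx6,
    hy0, hy1, hy2, hy3, hy4, hy5, hy6,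
    PiLp.inner_apply, RCLike.inner_apply, conj_trivial, Fin.sum_univ_seven]
  ring

/-- For a unit octonion `V = (v₀, v)`, the 3-form
`φ_V(α,β,γ) = ⟨Im((α∘V)∘(V̄∘β)), γ⟩` induced by the modified octonion product
equals `(v₀² − ‖v‖²)φ₀ − 2v₀ (v⌟ψ₀) + 2 v♭ ∧ (v⌟φ₀)`; the wedge of the 1-form
`v♭` with the 2-form `v⌟φ₀` is evaluated as
`(v♭∧(v⌟φ₀))(α,β,γ) = ⟨v,α⟩φ₀(v,β,γ) − ⟨v,β⟩φ₀(v,α,γ) + ⟨v,γ⟩φ₀(v,α,β)`. -/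
theorem sigmaV_formula
    (cross : EuclideanSpace ℝ (Fin 7) → EuclideanSpace ℝ (Fin 7) →
      EuclideanSpace ℝ (Fin 7))
    (hcross : ∀ u v w : EuclideanSpace ℝ (Fin 7), ⟪cross u v, w⟫ = phi0 u v w)
    (v₀ : ℝ) (v : EuclideanSpace ℝ (Fin 7)) (hV : v₀ ^ 2 + ‖v‖ ^ 2 = 1)
    (α β γ : EuclideanSpace ℝ (Fin 7)) :
    ⟪(omul cross (omul cross ((0 : ℝ), α) (v₀, v))
        (omul cross (oconj (v₀, v)) ((0 : ℝ), β))).2, γ⟫ =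
      (v₀ ^ 2 - ‖v‖ ^ 2) * phi0 α β γ - 2 * v₀ * psi0 v α β γ +
        2 * (⟪v, α⟫ * phi0 v β γ - ⟪v, β⟫ * phi0 v α γ + ⟪v, γ⟫ * phi0 v α β) := by
  have hc : ∀ (u w : EuclideanSpace ℝ (Fin 7)) (i : Fin 7),
      cross u w i = phi0 u w (EuclideanSpace.single i 1) := by
    intro u w i
    rw [← hcross u w (EuclideanSpace.single i 1)]
    simp [EuclideanSpace.inner_single_right]
  have hY : ∀ i, cross (-v) β i = -phi0 v β (EuclideanSpace.single i 1) := by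
    intro i; rw [hc, phi0_neg_left]
  -- unfold the octonion products
  simp only [omul, oconj, zero_mul, mul_zero, zero_smul, zero_add, add_zero,
    zero_sub, inner_neg_left, neg_neg, sub_neg_eq_add]
  -- expand the inner product with γ
  rw [inner_add_left, inner_add_left, real_inner_smul_left, real_inner_smul_left,
    hcross, inner_add_left, real_inner_smul_left, hcross,
    inner_add_left, real_inner_smul_left, hcross]
  -- expand the big trilinear term and the double-cross terms
  rw [phi0_expand2 v₀ v₀ α β (cross α v) (cross (-v) β) γ,
    key1 α v β γ (cross α v) (hc α v),
    key2 α v β γ (cross (-v) β) hY,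
    key3 α v β γ (cross α v) (cross (-v) β) (hc α v) hY,
    phi0_neg_left, phi0_swap α v γ,
    real_inner_comm α v, ← real_inner_self_eq_norm_sq v]
  ring
end
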